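/- Let S be a k-shredder of G, let C be the component of G \ S of largest volume, let x be a vertex in some other component Q_x of G \ S, and let Π be a set of k openly-disjoint paths from x ending in C. Then every component of G \ S other than C and Q_x is also a connected component of G \ (vertices of Π). -/

import Mathlib

open SimpleGraph

variable {V : Type*}

/-- The graph `G` with the vertices of `S` removed (vertices in `S` become isolated). -/
def delAdj (G : SimpleGraph V) (S : Set V) : SimpleGraph V where
  Adj u v := G.Adj u v ∧ u ∉ S ∧ v ∉ S
  symm := ⟨fun u v ⟨h, hu, hv⟩ => ⟨h.symm, hv, hu⟩⟩
  loopless := ⟨fun v h => G.irrefl h.1⟩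

/-- The subgraph of `G` induced on the vertex set `A` (other vertices become isolated). -/
def restrict (G : SimpleGraph V) (A : Set V) : SimpleGraph V where
  Adj u v := G.Adj u v ∧ u ∈ A ∧ v ∈ A
  symm := ⟨fun u v ⟨h, hu, hv⟩ => ⟨h.symm, hv, hu⟩⟩
  loopless := ⟨fun v h => G.irrefl h.1⟩

/-- `C` is a connected component of `G \ S`. -/
def IsComp (G : SimpleGraph V) (S C : Set V) : Prop :=
  ∃ v, v ∉ S ∧ C = {u | (delAdj G S).Reachable v u}

/-- The number of connected components of `G \ S`. -/
noncomputable def numComp (G : SimpleGraph V) (S : Set V) : ℕ :=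
  {C : Set V | IsComp G S C}.ncard

/-- The volume of a vertex set `Q`: the number of edges with at least one endpoint in `Q`. -/
noncomputable def vol (G : SimpleGraph V) (Q : Set V) : ℕ :=
  {e ∈ G.edgeSet | ∃ v ∈ Q, v ∈ e}.ncard

/-- `S` is a `k`-shredder: it has `k` vertices and `G \ S` has at least three components. -/
def IsShredder (G : SimpleGraph V) (k : ℕ) (S : Set V) : Prop :=
  S.ncard = k ∧ 3 ≤ numComp G S

/-- `G` is `k`-vertex-connected: it has more than `k` vertices and stays connected
after removing any set of fewer than `k` vertices. -/
def KConnected (G : SimpleGraph V) (k : ℕ) [Fintype V] : Prop :=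
  k < Fintype.card V ∧
    ∀ S : Set V, S.ncard < k → ∀ u v, u ∉ S → v ∉ S → (delAdj G S).Reachable u v

/-- `u` is an ancestor of `v` (or equal to it) in the tree `T` rooted at `r`:
every walk from the root to `v` passes through `u`. -/
def AncOf (T : SimpleGraph V) (r u v : V) : Prop :=
  ∀ p : T.Walk r v, u ∈ p.support

/-- `IsDFSTree G W r T` : `T` is a spanning tree of the induced graph `G[W]` that can be
produced by a depth-first search from `r ∈ W`:  DFS picks a neighbor `w` of `r`, recursively
explores the whole component of `w` in `G[W \ {r}]`, and then continues from `r` on the rest. -/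
inductive IsDFSTree (G : SimpleGraph V) : Set V → V → SimpleGraph V → Prop
  | single (r : V) : IsDFSTree G {r} r ⊥
  | step (W : Set V) (r w : V) (T₁ T₂ : SimpleGraph V)
      (hr : r ∈ W) (hw : w ∈ W) (hadj : G.Adj r w)
      (hT₁ : IsDFSTree G {u | (restrict G (W \ {r})).Reachable w u} w T₁)
      (hT₂ : IsDFSTree G (W \ {u | (restrict G (W \ {r})).Reachable w u}) r T₂) :
      IsDFSTree G W r (T₁ ⊔ T₂ ⊔ fromEdgeSet {s(r, w)})

/-- `C` is an internal component of `T \ U`: a component whose root (its vertex closest to the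
root `r` of `T`, i.e. the vertex of `C` that is an ancestor of all of `C`) is an ancestor of
some vertex of `U`. -/
def InternalComp (T : SimpleGraph V) (r : V) (U C : Set V) : Prop :=
  IsComp T U C ∧ ∃ ρ ∈ C, (∀ v ∈ C, AncOf T r ρ v) ∧ ∃ u ∈ U, AncOf T r ρ u

/-- `Straddles sup A S`: the set `A` (attachments of a bridge, or a candidate) straddles `S`
with respect to the paths whose supports are `sup i`: on some path an `A`-vertex strictly
precedes an `S`-vertex, and on some path an `A`-vertex strictly succeeds an `S`-vertex. -/
def Straddles [DecidableEq V] {k : ℕ} (sup : Fin k → List V) (A S : Set V) : Prop :=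
  (∃ i, ∃ u ∈ A, u ∈ sup i ∧ ∃ s ∈ S, s ∈ sup i ∧
      (sup i).idxOf u < (sup i).idxOf s) ∧
  (∃ j, ∃ v ∈ A, v ∈ sup j ∧ ∃ s ∈ S, s ∈ sup j ∧
      (sup j).idxOf s < (sup j).idxOf v)

/-- `IsBridgeAttach G PiV pedges Γ A` : `Γ` is a bridge of the path system with vertex set
`PiV` and edge lists `pedges i`, and `A` is its attachment set.  A bridge is either a
connected component of `G \ PiV` (attachments: its neighborhood), or an edge of `G` not on
any of the paths but with both endpoints on the paths (attachments: its two endpoints). -/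
def IsBridgeAttach (G : SimpleGraph V) {k : ℕ} (PiV : Set V)
    (pedges : Fin k → List (Sym2 V)) (Γ A : Set V) : Prop :=
  (IsComp G PiV Γ ∧ A = {v | v ∉ Γ ∧ ∃ u ∈ Γ, G.Adj u v}) ∨
  (∃ u v, G.Adj u v ∧ u ∈ PiV ∧ v ∈ PiV ∧ (∀ i, s(u, v) ∉ pedges i) ∧
    Γ = {u, v} ∧ A = {u, v})

section Aux

/-- A walk in `G` avoiding `S` yields reachability in `delAdj G S`. -/
lemma reach_avoid {G : SimpleGraph V} {S : Set V} {a b : V} (w : G.Walk a b)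
    (h : ∀ v ∈ w.support, v ∉ S) : (delAdj G S).Reachable a b := by
  induction w with
  | nil => exact Reachable.refl _
  | @cons u v c hadj w ih =>
    have h1 : u ∉ S := h u (by simp)
    have h2 : v ∉ S := h v (by simp)
    exact (Adj.reachable (G := delAdj G S) ⟨hadj, h1, h2⟩).trans
      (ih fun t ht => h t (by simp [ht]))

lemma delAdj_mono {G : SimpleGraph V} {S T : Set V} (h : S ⊆ T) :
    delAdj G T ≤ delAdj G S := fun {_ _} ha => ⟨ha.1, fun hs => ha.2.1 (h hs), fun hs => ha.2.2 (h hs)⟩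

lemma delAdj_delAdj_le {G : SimpleGraph V} {S T : Set V} :
    delAdj (delAdj G S) T ≤ delAdj G T := fun {_ _} ha => ⟨ha.1.1, ha.2.1, ha.2.2⟩

/-- Vertices reachable in `delAdj G S` from a vertex outside `S` are outside `S`. -/
lemma reach_not_mem {G : SimpleGraph V} {S : Set V} {v0 u : V} (hv0 : v0 ∉ S)
    (h : (delAdj G S).Reachable v0 u) : u ∉ S := by
  obtain ⟨w⟩ := h
  cases hw : w.reverse with
  | nil => exact hv0
  | cons h' _ => exact h'.2.1

/-- Two components sharing a vertex are equal. -/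
lemma comps_eq {G : SimpleGraph V} {S A B : Set V} (hA : IsComp G S A) (hB : IsComp G S B)
    {w : V} (hwA : w ∈ A) (hwB : w ∈ B) : A = B := by
  obtain ⟨a, _, rfl⟩ := hA
  obtain ⟨b, _, rfl⟩ := hB
  ext u
  simp only [Set.mem_setOf_eq] at *
  exact ⟨fun h => (hwB.trans hwA.symm).trans h, fun h => (hwA.trans hwB.symm).trans h⟩

lemma comp_disjoint_S {G : SimpleGraph V} {S A : Set V} (hA : IsComp G S A)
    {u : V} (hu : u ∈ A) : u ∉ S := by
  obtain ⟨a, ha, rfl⟩ := hA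
  exact reach_not_mem ha hu

end Aux

/-- if `S` is a `k`-shredder, `C` its largest-volume component, `x` a vertex of
another component `Qx`, and `Π` a family of `k` openly-disjoint paths from `x` ending in `C`,
then every component of `G \ S` other than `C` and `Qx` is a component of `G` minus the
vertices of `Π`. -/
theorem stmt_1 [Fintype V] [DecidableEq V] (G : SimpleGraph V) (k : ℕ)
    (hG : KConnected G k) (S : Set V) (hS : IsShredder G k S)
    (C : Set V) (hC : IsComp G S C) (hCmax : ∀ C', IsComp G S C' → vol G C' ≤ vol G C)
    (Qx : Set V) (hQx : IsComp G S Qx) (hQxC : Qx ≠ C)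
    (x : V) (hx : x ∈ Qx)
    (ends : Fin k → V) (hends : ∀ i, ends i ∈ C)
    (p : ∀ i, G.Walk x (ends i)) (hp : ∀ i, (p i).IsPath)
    (hdisj : ∀ i j, i ≠ j → ∀ v, v ∈ (p i).support → v ∈ (p j).support →
      v = x ∨ (v = ends i ∧ v = ends j)) :
    ∀ Q, IsComp G S Q → Q ≠ C → Q ≠ Qx →
      IsComp G {v | ∃ i, v ∈ (p i).support} Q := by
  intro Q hQ hQC hQQx
  set PiV : Set V := {v | ∃ i, v ∈ (p i).support} with hPiV
  have hQxS : ∀ u ∈ Qx, u ∉ S := fun u hu => comp_disjoint_S hQx hu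
  have hCS : ∀ u ∈ C, u ∉ S := fun u hu => comp_disjoint_S hC hu
  have hQS : ∀ u ∈ Q, u ∉ S := fun u hu => comp_disjoint_S hQ hu
  -- each path contains a vertex of S
  have hcross : ∀ j : Fin k, ∃ t, t ∈ (p j).support ∧ t ∈ S := by
    intro j
    by_contra hcon
    push_neg at hcon
    have hreach : (delAdj G S).Reachable x (ends j) := reach_avoid (p j) hcon
    obtain ⟨vx, hvx, hQxdef⟩ := id hQx
    have hxQ : (delAdj G S).Reachable vx x := by rw [hQxdef] at hx; exact hx
    have : ends j ∈ Qx := by rw [hQxdef]; exact hxQ.trans hreach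
    exact hQxC (comps_eq hQx hC this (hends j))
  choose s hs1 hs2 using hcross
  -- distinct paths contain distinct S-vertices
  have hkey : ∀ (t : V), t ∈ S → ∀ i j : Fin k, t ∈ (p i).support → t ∈ (p j).support → i = j := by
    intro t ht i j hi hj
    by_contra hij
    rcases hdisj i j hij t hi hj with rfl | ⟨rfl, _⟩
    · exact hQxS t hx ht
    · exact hCS _ (hends i) ht
  have hsinj : Function.Injective s := by
    intro i j hij
    exact hkey (s i) (hs2 i) i j (hs1 i) (hij ▸ hs1 j)
  -- S is exactly the set of chosen vertices
  have hSrange : S = Set.range s := by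
    have hsub : Set.range s ⊆ S := by rintro _ ⟨j, rfl⟩; exact hs2 j
    have hcard : (Set.range s).ncard = k := by
      rw [Set.ncard_eq_toFinset_card']
      rw [Set.toFinset_range, Finset.card_image_of_injective _ hsinj, Finset.card_univ,
        Fintype.card_fin]
    exact (Set.eq_of_subset_of_ncard_le hsub (by rw [hcard, hS.1]) (Set.toFinite S)).symm
  have hSPiV : S ⊆ PiV := by
    intro t ht
    rw [hSrange] at ht
    obtain ⟨j, rfl⟩ := ht
    exact ⟨j, hs1 j⟩
  -- Q is disjoint from the path vertices
  have hQPiV : ∀ v ∈ Q, v ∉ PiV := by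
    rintro v hvQ ⟨i, hvi⟩
    obtain ⟨v0, hv0, hQdef⟩ := id hQ
    -- prefix from x to v must contain an S vertex
    have hnr1 : ¬ (delAdj G S).Reachable x v := by
      intro hr
      obtain ⟨vx, hvx, hQxdef⟩ := id hQx
      have hxQ : (delAdj G S).Reachable vx x := by rw [hQxdef] at hx; exact hx
      have : v ∈ Qx := by rw [hQxdef]; exact hxQ.trans hr
      exact hQQx (comps_eq hQ hQx hvQ this)
    have hnr2 : ¬ (delAdj G S).Reachable v (ends i) := by
      intro hr
      have hv0v : (delAdj G S).Reachable v0 v := by rw [hQdef] at hvQ; exact hvQ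
      have : ends i ∈ Q := by rw [hQdef]; exact hv0v.trans hr
      exact hQC (comps_eq hQ hC this (hends i))
    have h1 : ∃ t ∈ ((p i).takeUntil v hvi).support, t ∈ S := by
      by_contra hcon
      push_neg at hcon
      exact hnr1 (reach_avoid _ hcon)
    have h2 : ∃ t ∈ ((p i).dropUntil v hvi).support, t ∈ S := by
      by_contra hcon
      push_neg at hcon
      exact hnr2 (reach_avoid _ hcon)
    obtain ⟨s1, hs1', hs1S⟩ := h1
    obtain ⟨s2, hs2', hs2S⟩ := h2
    -- s1 ≠ s2 by nodup of path support
    have hnodup : ((p i).support).Nodup := (hp i).support_nodup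
    have hsplit : (p i).support =
        ((p i).takeUntil v hvi).support ++ ((p i).dropUntil v hvi).support.tail := by
      conv_lhs => rw [← SimpleGraph.Walk.take_spec (p i) hvi]
      exact SimpleGraph.Walk.support_append _ _
    rw [hsplit] at hnodup
    have hdisjlist := (List.nodup_append.mp hnodup).2.2
    have hne : s1 ≠ s2 := by
      intro heq
      subst heq
      have hs1v : s1 ≠ v := fun hh => hQS v hvQ (hh ▸ hs1S)
      have : s1 ∈ ((p i).dropUntil v hvi).support.tail := by
        have hcons := SimpleGraph.Walk.support_eq_cons ((p i).dropUntil v hvi)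
        rw [hcons, List.mem_cons] at hs2'
        rcases hs2' with hh | hh
        · exact absurd hh hs1v
        · exact hh
      exact hdisjlist _ hs1' _ this rfl
    -- both s1 and s2 must be the unique S-vertex on path i
    have hs1p : s1 ∈ (p i).support := SimpleGraph.Walk.support_takeUntil_subset _ _ hs1'
    have hs2p : s2 ∈ (p i).support := SimpleGraph.Walk.support_dropUntil_subset _ _ hs2'
    have e1 : s1 = s i := by
      have := hs1S
      rw [hSrange] at this
      obtain ⟨j, rfl⟩ := this
      rw [hkey (s j) (hs2 j) j i (hs1 j) hs1p]
    have e2 : s2 = s i := by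
      have := hs2S
      rw [hSrange] at this
      obtain ⟨j, rfl⟩ := this
      rw [hkey (s j) (hs2 j) j i (hs1 j) hs2p]
    exact hne (e1.trans e2.symm)
  -- conclude: Q is a component of G minus PiV
  obtain ⟨v0, hv0S, hQdef⟩ := hQ
  have hv0Q : v0 ∈ Q := by rw [hQdef]; exact Reachable.refl _
  refine ⟨v0, hQPiV v0 hv0Q, ?_⟩
  ext u
  simp only [Set.mem_setOf_eq]
  constructor
  · intro huQ
    have hr : (delAdj G S).Reachable v0 u := by rw [hQdef] at huQ; exact huQ
    obtain ⟨w⟩ := hr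
    have hsup : ∀ t ∈ w.support, t ∉ PiV := by
      intro t ht
      have : (delAdj G S).Reachable v0 t := ⟨w.takeUntil t ht⟩
      exact hQPiV t (by rw [hQdef]; exact this)
    exact (reach_avoid w hsup).mono delAdj_delAdj_le
  · intro hr
    rw [hQdef]
    exact hr.mono (delAdj_mono hSPiV)
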